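/- Let b be locally integrable and b⃗ = (b,b). For every x, the linear commutator of the bilinear maximal function satisfies the pointwise bound |[Σb⃗, 𝓜](f₁,f₂)(x)| ≤ C(𝓜_{Σb⃗}(f₁,f₂)(x) + b⁻(x)·𝓜(f₁,f₂)(x)), where b⁻(x) = -min{b(x),0}. -/

import Mathlib

open MeasureTheory ENNReal NNReal

noncomputable section

abbrev Rn (n : ℕ) := Fin n → ℝ

variable {n : ℕ}

/-- A cube in ℝⁿ: a closed ball in the sup norm, with center `c` and half side-length `r`. -/
def Cube (c : Rn n) (r : ℝ) : Set (Rn n) := Metric.closedBall c r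

/-- Average of an `ℝ≥0∞`-valued function over a cube. -/
def cubeAvgE (g : Rn n → ℝ≥0∞) (c : Rn n) (r : ℝ) : ℝ≥0∞ :=
  (∫⁻ y in Cube c r, g y) / volume (Cube c r)

/-- Average of a real-valued function over a cube. -/
def cubeAvg (f : Rn n → ℝ) (c : Rn n) (r : ℝ) : ℝ :=
  (∫ y in Cube c r, f y) / (volume (Cube c r)).toReal

/-- ω-measure of a cube. -/
def wVol (ω : Rn n → ℝ) (c : Rn n) (r : ℝ) : ℝ≥0∞ :=
  ∫⁻ y in Cube c r, ENNReal.ofReal (ω y)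

/-- The bilinear Hardy–Littlewood maximal function 𝓜. -/
def biM (f₁ f₂ : Rn n → ℝ) (x : Rn n) : ℝ≥0∞ :=
  ⨆ (c : Rn n) (r : ℝ) (_ : 0 < r) (_ : x ∈ Cube c r),
    cubeAvgE (fun y => ENNReal.ofReal |f₁ y|) c r *
      cubeAvgE (fun y => ENNReal.ofReal |f₂ y|) c r

/-- The local maximal function M_{Q₀}, over subcubes of Q₀ = Cube c₀ r₀ containing x. -/
def locM (c₀ : Rn n) (r₀ : ℝ) (b : Rn n → ℝ) (x : Rn n) : ℝ≥0∞ :=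
  ⨆ (c : Rn n) (r : ℝ) (_ : 0 < r) (_ : x ∈ Cube c r) (_ : Cube c r ⊆ Cube c₀ r₀),
    cubeAvgE (fun y => ENNReal.ofReal |b y|) c r

/-- Maximal function of an `ℝ≥0∞`-valued function. -/
def eM (g : Rn n → ℝ≥0∞) (x : Rn n) : ℝ≥0∞ :=
  ⨆ (c : Rn n) (r : ℝ) (_ : 0 < r) (_ : x ∈ Cube c r), cubeAvgE g c r

/-- The Hardy–Littlewood maximal function M. -/
def HLM (f : Rn n → ℝ) : Rn n → ℝ≥0∞ := eM (fun y => ENNReal.ofReal |f y|)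

/-- The weighted maximal function M_{ω,s} = (M_ω(|f|^s))^{1/s}. -/
def wM (s : ℝ) (ω f : Rn n → ℝ) (x : Rn n) : ℝ≥0∞ :=
  (⨆ (c : Rn n) (r : ℝ) (_ : 0 < r) (_ : x ∈ Cube c r),
    (∫⁻ y in Cube c r, ENNReal.ofReal |f y| ^ s * ENNReal.ofReal (ω y)) / wVol ω c r) ^ (1 / s)

/-- Weighted L^p norm of an `ℝ≥0∞`-valued function. -/
def wNormE (p : ℝ) (ω : Rn n → ℝ) (g : Rn n → ℝ≥0∞) : ℝ≥0∞ :=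
  (∫⁻ x, g x ^ p * ENNReal.ofReal (ω x)) ^ (1 / p)

/-- Weighted L^p norm of a real-valued function. -/
def wNorm (p : ℝ) (ω f : Rn n → ℝ) : ℝ≥0∞ :=
  wNormE p ω fun x => ENNReal.ofReal |f x|

/-- Maximal commutator 𝓜^{(1)}_b. -/
def Mc1 (b f₁ f₂ : Rn n → ℝ) (x : Rn n) : ℝ≥0∞ :=
  ⨆ (c : Rn n) (r : ℝ) (_ : 0 < r) (_ : x ∈ Cube c r),
    (∫⁻ y₁ in Cube c r, ∫⁻ y₂ in Cube c r,
      ENNReal.ofReal |b x - b y₁| * (ENNReal.ofReal |f₁ y₁| * ENNReal.ofReal |f₂ y₂|)) /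
      volume (Cube c r) ^ 2

/-- Maximal commutator 𝓜^{(2)}_b. -/
def Mc2 (b f₁ f₂ : Rn n → ℝ) (x : Rn n) : ℝ≥0∞ :=
  ⨆ (c : Rn n) (r : ℝ) (_ : 0 < r) (_ : x ∈ Cube c r),
    (∫⁻ y₁ in Cube c r, ∫⁻ y₂ in Cube c r,
      ENNReal.ofReal |b x - b y₂| * (ENNReal.ofReal |f₁ y₁| * ENNReal.ofReal |f₂ y₂|)) /
      volume (Cube c r) ^ 2

/-- The maximal linear commutator 𝓜_{Σb⃗} for b⃗ = (b,b). -/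
def MSigma (b f₁ f₂ : Rn n → ℝ) (x : Rn n) : ℝ≥0∞ := Mc1 b f₁ f₂ x + Mc2 b f₁ f₂ x

/-- The maximal iterated commutator 𝓜_{Πb⃗} for b⃗ = (b,b). -/
def MPi (b f₁ f₂ : Rn n → ℝ) (x : Rn n) : ℝ≥0∞ :=
  ⨆ (c : Rn n) (r : ℝ) (_ : 0 < r) (_ : x ∈ Cube c r),
    (∫⁻ y₁ in Cube c r, ∫⁻ y₂ in Cube c r,
      ENNReal.ofReal |b x - b y₁| * ENNReal.ofReal |b x - b y₂| *
        (ENNReal.ofReal |f₁ y₁| * ENNReal.ofReal |f₂ y₂|)) /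
      volume (Cube c r) ^ 2

/-- The negative part b⁻ = -min{b,0}. -/
def bminus (b : Rn n → ℝ) (x : Rn n) : ℝ := max (-b x) 0

/-- The linear commutator [Σb⃗,𝓜] = [b,𝓜]^{(1)} + [b,𝓜]^{(2)}, b⃗ = (b,b). -/
def commSigma (b f₁ f₂ : Rn n → ℝ) (x : Rn n) : ℝ :=
  (b x * (biM f₁ f₂ x).toReal - (biM (fun y => b y * f₁ y) f₂ x).toReal) +
  (b x * (biM f₁ f₂ x).toReal - (biM f₁ (fun y => b y * f₂ y) x).toReal)

/-- The iterated commutator [Πb⃗,𝓜], b⃗ = (b,b). -/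
def commPi (b f₁ f₂ : Rn n → ℝ) (x : Rn n) : ℝ :=
  b x ^ 2 * (biM f₁ f₂ x).toReal - b x * (biM f₁ (fun y => b y * f₂ y) x).toReal
    - b x * (biM (fun y => b y * f₁ y) f₂ x).toReal
    + (biM (fun y => b y * f₁ y) (fun y => b y * f₂ y) x).toReal

/-- The weighted BMO^q(ω) norm. -/
def bmoNorm (q : ℝ) (ω b : Rn n → ℝ) : ℝ≥0∞ :=
  ⨆ (c : Rn n) (r : ℝ) (_ : 0 < r),
    ((∫⁻ y in Cube c r,
        ENNReal.ofReal |b y - cubeAvg b c r| ^ q * ENNReal.ofReal (ω y) ^ (1 - q)) /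
      wVol ω c r) ^ (1 / q)

/-- The Muckenhoupt class A₁. -/
def IsA1 (ω : Rn n → ℝ) : Prop :=
  Measurable ω ∧ (∀ x, 0 ≤ ω x) ∧ (∀ᵐ x ∂(volume : Measure (Rn n)), 0 < ω x) ∧
    LocallyIntegrable ω ∧
    ∃ C > (0 : ℝ), ∀ (c : Rn n) (r : ℝ), 0 < r →
      wVol ω c r / volume (Cube c r) ≤
        ENNReal.ofReal C * essInf (fun y => ENNReal.ofReal (ω y)) (volume.restrict (Cube c r))

/-- The Muckenhoupt class A_q, 1 < q < ∞. -/
def IsAq (q : ℝ) (ω : Rn n → ℝ) : Prop :=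
  Measurable ω ∧ (∀ x, 0 ≤ ω x) ∧ (∀ᵐ x ∂(volume : Measure (Rn n)), 0 < ω x) ∧
    LocallyIntegrable ω ∧
    ∃ C : ℝ, ∀ (c : Rn n) (r : ℝ), 0 < r →
      (wVol ω c r / volume (Cube c r)) *
        ((∫⁻ y in Cube c r, ENNReal.ofReal (ω y) ^ (-(1 / (q - 1)))) /
          volume (Cube c r)) ^ (q - 1) ≤ ENNReal.ofReal C

/-- A_∞ = ∪_{1 ≤ q < ∞} A_q. -/
def IsAinfty (ω : Rn n → ℝ) : Prop := IsA1 ω ∨ ∃ q > (1 : ℝ), IsAq q ω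

/-- The Fefferman–Stein sharp maximal function M^♯. -/
def sharpM (g : Rn n → ℝ) (x : Rn n) : ℝ≥0∞ :=
  ⨆ (c : Rn n) (r : ℝ) (_ : 0 < r) (_ : x ∈ Cube c r),
    (∫⁻ y in Cube c r, ENNReal.ofReal |g y - cubeAvg g c r|) / volume (Cube c r)

/-- M^♯_δ(g) = (M^♯(|g|^δ))^{1/δ}. -/
def sharpMd (δ : ℝ) (g : Rn n → ℝ) (x : Rn n) : ℝ≥0∞ :=
  sharpM (fun y => |g y| ^ δ) x ^ (1 / δ)

/-- The characteristic function of the cube Q = Cube c r. -/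
def chi (c : Rn n) (r : ℝ) : Rn n → ℝ := (Cube c r).indicator fun _ => 1

end

section auxlemmas
open MeasureTheory

variable {α : Type*} [MeasurableSpace α] {μ : Measure α}

lemma my_lintegral_mul_const_ge (g : α → ℝ≥0∞) (K : ℝ≥0∞) :
    (∫⁻ y, g y ∂μ) * K ≤ ∫⁻ y, g y * K ∂μ := by
  rcases eq_or_ne K ∞ with hK | hK
  · subst hK
    have h1 : (∫⁻ y, g y ∂μ) * ∞ = ⨆ N : ℕ, (∫⁻ y, g y ∂μ) * N := by
      rw [← ENNReal.mul_iSup, ENNReal.iSup_natCast]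
    rw [h1]
    refine iSup_le fun N => ?_
    rw [← lintegral_mul_const' (N : ℝ≥0∞) g (by simp)]
    exact lintegral_mono fun y => mul_le_mul_right le_top _
  · rw [lintegral_mul_const' K g hK]

lemma my_L1 (c : ℝ≥0∞) (hc : c ≠ ∞) (u v w : α → ℝ≥0∞) (hu : AEMeasurable u μ)
    (huv : ∀ y, c ≤ u y + v y) :
    c * ∫⁻ y, w y ∂μ ≤ (∫⁻ y, u y * w y ∂μ) + ∫⁻ y, v y * w y ∂μ := by
  rw [lintegral_def, ENNReal.mul_iSup]
  refine iSup_le fun s => ?_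
  rw [ENNReal.mul_iSup]
  refine iSup_le fun hs => ?_
  have h0 : c * s.lintegral μ = ∫⁻ y, c * s y ∂μ := by
    rw [← s.lintegral_eq_lintegral μ, lintegral_const_mul' c (fun y => s y) hc]
  rw [h0]
  calc ∫⁻ y, c * s y ∂μ ≤ ∫⁻ y, (u y + v y) * s y ∂μ :=
        lintegral_mono fun y => mul_le_mul_left (huv y) _
    _ = ∫⁻ y, (u y * s y + v y * s y) ∂μ := by simp_rw [add_mul]
    _ = (∫⁻ y, u y * s y ∂μ) + ∫⁻ y, v y * s y ∂μ :=
        lintegral_add_left' (hu.mul s.measurable.aemeasurable) _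
    _ ≤ (∫⁻ y, u y * w y ∂μ) + ∫⁻ y, v y * w y ∂μ :=
        add_le_add (lintegral_mono fun y => mul_le_mul_right (hs y) _)
          (lintegral_mono fun y => mul_le_mul_right (hs y) _)

lemma my_L2 (c : ℝ≥0∞) (hc : c ≠ ∞) (u v w : α → ℝ≥0∞) (hu : AEMeasurable u μ)
    (hut : ∀ y, u y ≠ ∞) (huv : ∀ y, u y ≤ c + v y) :
    ∫⁻ y, u y * w y ∂μ ≤ c * (∫⁻ y, w y ∂μ) + ∫⁻ y, v y * w y ∂μ := by
  conv_lhs => rw [lintegral_def]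
  refine iSup_le fun t => iSup_le fun ht => ?_
  set s : α → ℝ≥0∞ := fun y => t y / u y with hs_def
  have hs_meas : AEMeasurable s μ := t.measurable.aemeasurable.div hu
  have hsw : ∀ y, s y ≤ w y := by
    intro y
    rcases eq_or_ne (u y) 0 with h0 | h0
    · have : t y = 0 := le_antisymm (by simpa [h0] using ht y) zero_le
      simp [hs_def, this]
    · have h2 : t y / u y ≤ u y * w y / u y :=
        ENNReal.div_le_div_right (ht y) _
      rwa [mul_comm, mul_div_assoc, ENNReal.div_self h0 (hut y), mul_one] at h2
  have hts : ∀ y, t y ≤ u y * s y := by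
    intro y
    rcases eq_or_ne (u y) 0 with h0 | h0
    · have : t y = 0 := le_antisymm (by simpa [h0] using ht y) zero_le
      simp [this]
    · rw [hs_def, ENNReal.mul_div_cancel h0 (hut y)]
  rw [← t.lintegral_eq_lintegral μ]
  calc ∫⁻ y, t y ∂μ ≤ ∫⁻ y, u y * s y ∂μ := lintegral_mono hts
    _ ≤ ∫⁻ y, (c + v y) * s y ∂μ := lintegral_mono fun y => mul_le_mul_left (huv y) _
    _ = ∫⁻ y, (c * s y + v y * s y) ∂μ := by simp_rw [add_mul]
    _ = (∫⁻ y, c * s y ∂μ) + ∫⁻ y, v y * s y ∂μ :=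
        lintegral_add_left' (aemeasurable_const.mul hs_meas) _
    _ = c * (∫⁻ y, s y ∂μ) + ∫⁻ y, v y * s y ∂μ := by rw [lintegral_const_mul' c _ hc]
    _ ≤ c * (∫⁻ y, w y ∂μ) + ∫⁻ y, v y * w y ∂μ :=
        add_le_add (mul_le_mul_right (lintegral_mono hsw) _)
          (lintegral_mono fun y => mul_le_mul_right (hsw y) _)

end auxlemmas

section cubes
open MeasureTheory

variable {n : ℕ}

lemma cube_vol_ne_zero (c : Rn n) {r : ℝ} (hr : 0 < r) : volume (Cube c r) ≠ 0 :=
  (Metric.measure_closedBall_pos _ c hr).ne'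

lemma cube_vol_ne_top (c : Rn n) (r : ℝ) : volume (Cube c r) ≠ ∞ :=
  measure_closedBall_lt_top.ne

lemma div_sq {V : ℝ≥0∞} (hV0 : V ≠ 0) (hVt : V ≠ ∞) (a b : ℝ≥0∞) :
    (a / V) * (b / V) = (a * b) / V ^ 2 := by
  rw [div_eq_mul_inv, div_eq_mul_inv, div_eq_mul_inv, sq,
    ENNReal.mul_inv (Or.inl hV0) (Or.inl hVt)]
  ring

lemma term_le_biM (F G : Rn n → ℝ) (x c : Rn n) {r : ℝ} (hr : 0 < r) (hx : x ∈ Cube c r) :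
    cubeAvgE (fun y => ENNReal.ofReal |F y|) c r *
      cubeAvgE (fun y => ENNReal.ofReal |G y|) c r ≤ biM F G x :=
  le_iSup_of_le c (le_iSup_of_le r (le_iSup_of_le hr (le_iSup_of_le hx le_rfl)))

lemma term_le_Mc1 (b F G : Rn n → ℝ) (x c : Rn n) {r : ℝ} (hr : 0 < r) (hx : x ∈ Cube c r) :
    (∫⁻ y₁ in Cube c r, ∫⁻ y₂ in Cube c r,
      ENNReal.ofReal |b x - b y₁| * (ENNReal.ofReal |F y₁| * ENNReal.ofReal |G y₂|)) /
      volume (Cube c r) ^ 2 ≤ Mc1 b F G x :=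
  le_iSup_of_le c (le_iSup_of_le r (le_iSup_of_le hr (le_iSup_of_le hx le_rfl)))

lemma term_le_Mc2 (b F G : Rn n → ℝ) (x c : Rn n) {r : ℝ} (hr : 0 < r) (hx : x ∈ Cube c r) :
    (∫⁻ y₁ in Cube c r, ∫⁻ y₂ in Cube c r,
      ENNReal.ofReal |b x - b y₂| * (ENNReal.ofReal |F y₁| * ENNReal.ofReal |G y₂|)) /
      volume (Cube c r) ^ 2 ≤ Mc2 b F G x :=
  le_iSup_of_le c (le_iSup_of_le r (le_iSup_of_le hr (le_iSup_of_le hx le_rfl)))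

end cubes


section keys
open MeasureTheory

variable {n : ℕ}

lemma abs_ofReal_le (a c : ℝ) : ENNReal.ofReal |a| ≤ ENNReal.ofReal |c| + ENNReal.ofReal |a - c| := by
  rw [← ENNReal.ofReal_add (abs_nonneg _) (abs_nonneg _)]
  refine ENNReal.ofReal_le_ofReal ?_
  calc |a| = |c + (a - c)| := by ring_nf
    _ ≤ |c| + |a - c| := abs_add_le _ _

lemma fub1 (b F G : Rn n → ℝ) (x c : Rn n) (r : ℝ) :
    (∫⁻ y in Cube c r, ENNReal.ofReal |b x - b y| * ENNReal.ofReal |F y|) *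
      (∫⁻ y in Cube c r, ENNReal.ofReal |G y|) ≤
    ∫⁻ y₁ in Cube c r, ∫⁻ y₂ in Cube c r,
      ENNReal.ofReal |b x - b y₁| * (ENNReal.ofReal |F y₁| * ENNReal.ofReal |G y₂|) := by
  have inner : ∀ y₁, (∫⁻ y₂ in Cube c r,
      ENNReal.ofReal |b x - b y₁| * (ENNReal.ofReal |F y₁| * ENNReal.ofReal |G y₂|))
      = (ENNReal.ofReal |b x - b y₁| * ENNReal.ofReal |F y₁|) *
        ∫⁻ y₂ in Cube c r, ENNReal.ofReal |G y₂| := by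
    intro y₁
    simp_rw [← mul_assoc]
    exact lintegral_const_mul' _ _ (ENNReal.mul_ne_top ENNReal.ofReal_ne_top ENNReal.ofReal_ne_top)
  calc (∫⁻ y in Cube c r, ENNReal.ofReal |b x - b y| * ENNReal.ofReal |F y|) *
        (∫⁻ y in Cube c r, ENNReal.ofReal |G y|)
      ≤ ∫⁻ y₁ in Cube c r, (ENNReal.ofReal |b x - b y₁| * ENNReal.ofReal |F y₁|) *
          ∫⁻ y₂ in Cube c r, ENNReal.ofReal |G y₂| := my_lintegral_mul_const_ge _ _
    _ = _ := lintegral_congr fun y₁ => (inner y₁).symm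

lemma fub2 (b F G : Rn n → ℝ) (x c : Rn n) (r : ℝ) :
    (∫⁻ y in Cube c r, ENNReal.ofReal |F y|) *
      (∫⁻ y in Cube c r, ENNReal.ofReal |b x - b y| * ENNReal.ofReal |G y|) ≤
    ∫⁻ y₁ in Cube c r, ∫⁻ y₂ in Cube c r,
      ENNReal.ofReal |b x - b y₂| * (ENNReal.ofReal |F y₁| * ENNReal.ofReal |G y₂|) := by
  have inner : ∀ y₁, (∫⁻ y₂ in Cube c r,
      ENNReal.ofReal |b x - b y₂| * (ENNReal.ofReal |F y₁| * ENNReal.ofReal |G y₂|))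
      = ENNReal.ofReal |F y₁| *
        ∫⁻ y₂ in Cube c r, ENNReal.ofReal |b x - b y₂| * ENNReal.ofReal |G y₂| := by
    intro y₁
    calc ∫⁻ y₂ in Cube c r,
          ENNReal.ofReal |b x - b y₂| * (ENNReal.ofReal |F y₁| * ENNReal.ofReal |G y₂|)
        = ∫⁻ y₂ in Cube c r,
          ENNReal.ofReal |F y₁| * (ENNReal.ofReal |b x - b y₂| * ENNReal.ofReal |G y₂|) :=
          lintegral_congr fun y₂ => by ring
      _ = _ := lintegral_const_mul' _ _ ENNReal.ofReal_ne_top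
  calc (∫⁻ y in Cube c r, ENNReal.ofReal |F y|) *
        (∫⁻ y in Cube c r, ENNReal.ofReal |b x - b y| * ENNReal.ofReal |G y|)
      ≤ ∫⁻ y₁ in Cube c r, ENNReal.ofReal |F y₁| *
          ∫⁻ y₂ in Cube c r, ENNReal.ofReal |b x - b y₂| * ENNReal.ofReal |G y₂| :=
        my_lintegral_mul_const_ge _ _
    _ = _ := lintegral_congr fun y₁ => (inner y₁).symm

lemma Ib_eq (b F : Rn n → ℝ) (c : Rn n) (r : ℝ) :
    (∫⁻ y in Cube c r, ENNReal.ofReal |b y * F y|)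
      = ∫⁻ y in Cube c r, ENNReal.ofReal |b y| * ENNReal.ofReal |F y| :=
  lintegral_congr fun y => by rw [abs_mul, ENNReal.ofReal_mul (abs_nonneg _)]

variable {b : Rn n → ℝ}

lemma key1 (hb : AEMeasurable b volume) (f₁ f₂ : Rn n → ℝ) (x : Rn n) :
    ENNReal.ofReal |b x| * biM f₁ f₂ x ≤
      biM (fun y => b y * f₁ y) f₂ x + Mc1 b f₁ f₂ x := by
  have expand : ENNReal.ofReal |b x| * biM f₁ f₂ x =
      ⨆ (c : Rn n) (r : ℝ) (_ : 0 < r) (_ : x ∈ Cube c r),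
        ENNReal.ofReal |b x| *
          (cubeAvgE (fun y => ENNReal.ofReal |f₁ y|) c r *
            cubeAvgE (fun y => ENNReal.ofReal |f₂ y|) c r) := by
    simp only [biM, ENNReal.mul_iSup]
  rw [expand]
  refine iSup_le fun c => iSup_le fun r => iSup_le fun hr => iSup_le fun hx => ?_
  have hV0 := cube_vol_ne_zero c hr
  have hVt := cube_vol_ne_top c r
  set V := volume (Cube c r)
  set I₁ := ∫⁻ y in Cube c r, ENNReal.ofReal |f₁ y| with hI₁
  set I₂ := ∫⁻ y in Cube c r, ENNReal.ofReal |f₂ y| with hI₂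
  set Ib := ∫⁻ y in Cube c r, ENNReal.ofReal |b y| * ENNReal.ofReal |f₁ y| with hIb
  set Id := ∫⁻ y in Cube c r, ENNReal.ofReal |b x - b y| * ENNReal.ofReal |f₁ y| with hId
  have h1 : ENNReal.ofReal |b x| * I₁ ≤ Ib + Id :=
    my_L1 _ ENNReal.ofReal_ne_top _ _ _
      (((measurable_abs.comp_aemeasurable hb).ennreal_ofReal).restrict)
      (fun y => abs_ofReal_le (b x) (b y))
  calc ENNReal.ofReal |b x| *
        (cubeAvgE (fun y => ENNReal.ofReal |f₁ y|) c r *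
          cubeAvgE (fun y => ENNReal.ofReal |f₂ y|) c r)
      = (ENNReal.ofReal |b x| * I₁) * I₂ / V ^ 2 := by
        show ENNReal.ofReal |b x| * (I₁ / V * (I₂ / V)) = _
        rw [div_sq hV0 hVt, div_eq_mul_inv, div_eq_mul_inv]; ring
    _ ≤ (Ib + Id) * I₂ / V ^ 2 :=
        ENNReal.div_le_div_right (mul_le_mul_left h1 I₂) _
    _ = Ib * I₂ / V ^ 2 + Id * I₂ / V ^ 2 := by rw [add_mul, ENNReal.add_div]
    _ ≤ biM (fun y => b y * f₁ y) f₂ x + Mc1 b f₁ f₂ x := by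
        refine add_le_add ?_ ?_
        · refine le_trans (le_of_eq ?_) (term_le_biM (fun y => b y * f₁ y) f₂ x c hr hx)
          show _ = (∫⁻ y in Cube c r, ENNReal.ofReal |b y * f₁ y|) / V *
            ((∫⁻ y in Cube c r, ENNReal.ofReal |f₂ y|) / V)
          rw [Ib_eq, div_sq hV0 hVt]
        · refine le_trans ?_ (term_le_Mc1 b f₁ f₂ x c hr hx)
          exact ENNReal.div_le_div_right (fub1 b f₁ f₂ x c r) _

lemma key2 (hb : AEMeasurable b volume) (f₁ f₂ : Rn n → ℝ) (x : Rn n) :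
    biM (fun y => b y * f₁ y) f₂ x ≤
      ENNReal.ofReal |b x| * biM f₁ f₂ x + Mc1 b f₁ f₂ x := by
  rw [show biM (fun y => b y * f₁ y) f₂ x =
      ⨆ (c : Rn n) (r : ℝ) (_ : 0 < r) (_ : x ∈ Cube c r),
        cubeAvgE (fun y => ENNReal.ofReal |b y * f₁ y|) c r *
          cubeAvgE (fun y => ENNReal.ofReal |f₂ y|) c r from rfl]
  refine iSup_le fun c => iSup_le fun r => iSup_le fun hr => iSup_le fun hx => ?_
  have hV0 := cube_vol_ne_zero c hr
  have hVt := cube_vol_ne_top c r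
  set V := volume (Cube c r)
  set I₁ := ∫⁻ y in Cube c r, ENNReal.ofReal |f₁ y| with hI₁
  set I₂ := ∫⁻ y in Cube c r, ENNReal.ofReal |f₂ y| with hI₂
  set Ib := ∫⁻ y in Cube c r, ENNReal.ofReal |b y| * ENNReal.ofReal |f₁ y| with hIb
  set Id := ∫⁻ y in Cube c r, ENNReal.ofReal |b x - b y| * ENNReal.ofReal |f₁ y| with hId
  have h1 : Ib ≤ ENNReal.ofReal |b x| * I₁ + Id :=
    my_L2 _ ENNReal.ofReal_ne_top _ _ _
      (((measurable_abs.comp_aemeasurable hb).ennreal_ofReal).restrict)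
      (fun y => ENNReal.ofReal_ne_top)
      (fun y => by
        have := abs_ofReal_le (b y) (b x)
        rwa [show |b y - b x| = |b x - b y| from abs_sub_comm _ _] at this)
  calc cubeAvgE (fun y => ENNReal.ofReal |b y * f₁ y|) c r *
        cubeAvgE (fun y => ENNReal.ofReal |f₂ y|) c r
      = Ib * I₂ / V ^ 2 := by
        show (∫⁻ y in Cube c r, ENNReal.ofReal |b y * f₁ y|) / V * (I₂ / V) = _
        rw [Ib_eq, div_sq hV0 hVt]
    _ ≤ (ENNReal.ofReal |b x| * I₁ + Id) * I₂ / V ^ 2 :=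
        ENNReal.div_le_div_right (mul_le_mul_left h1 I₂) _
    _ = ENNReal.ofReal |b x| * (I₁ * I₂ / V ^ 2) + Id * I₂ / V ^ 2 := by
        simp only [div_eq_mul_inv]; ring
    _ ≤ ENNReal.ofReal |b x| * biM f₁ f₂ x + Mc1 b f₁ f₂ x := by
        refine add_le_add (mul_le_mul_right ?_ _) ?_
        · refine le_trans (le_of_eq ?_) (term_le_biM f₁ f₂ x c hr hx)
          rw [← div_sq hV0 hVt]
          rfl
        · refine le_trans ?_ (term_le_Mc1 b f₁ f₂ x c hr hx)
          exact ENNReal.div_le_div_right (fub1 b f₁ f₂ x c r) _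

lemma key3 (hb : AEMeasurable b volume) (f₁ f₂ : Rn n → ℝ) (x : Rn n) :
    ENNReal.ofReal |b x| * biM f₁ f₂ x ≤
      biM f₁ (fun y => b y * f₂ y) x + Mc2 b f₁ f₂ x := by
  have expand : ENNReal.ofReal |b x| * biM f₁ f₂ x =
      ⨆ (c : Rn n) (r : ℝ) (_ : 0 < r) (_ : x ∈ Cube c r),
        ENNReal.ofReal |b x| *
          (cubeAvgE (fun y => ENNReal.ofReal |f₁ y|) c r *
            cubeAvgE (fun y => ENNReal.ofReal |f₂ y|) c r) := by
    simp only [biM, ENNReal.mul_iSup]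
  rw [expand]
  refine iSup_le fun c => iSup_le fun r => iSup_le fun hr => iSup_le fun hx => ?_
  have hV0 := cube_vol_ne_zero c hr
  have hVt := cube_vol_ne_top c r
  set V := volume (Cube c r)
  set I₁ := ∫⁻ y in Cube c r, ENNReal.ofReal |f₁ y| with hI₁
  set I₂ := ∫⁻ y in Cube c r, ENNReal.ofReal |f₂ y| with hI₂
  set Ib := ∫⁻ y in Cube c r, ENNReal.ofReal |b y| * ENNReal.ofReal |f₂ y| with hIb
  set Id := ∫⁻ y in Cube c r, ENNReal.ofReal |b x - b y| * ENNReal.ofReal |f₂ y| with hId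
  have h1 : ENNReal.ofReal |b x| * I₂ ≤ Ib + Id :=
    my_L1 _ ENNReal.ofReal_ne_top _ _ _
      (((measurable_abs.comp_aemeasurable hb).ennreal_ofReal).restrict)
      (fun y => abs_ofReal_le (b x) (b y))
  calc ENNReal.ofReal |b x| *
        (cubeAvgE (fun y => ENNReal.ofReal |f₁ y|) c r *
          cubeAvgE (fun y => ENNReal.ofReal |f₂ y|) c r)
      = I₁ * (ENNReal.ofReal |b x| * I₂) / V ^ 2 := by
        show ENNReal.ofReal |b x| * (I₁ / V * (I₂ / V)) = _
        rw [div_sq hV0 hVt, div_eq_mul_inv, div_eq_mul_inv]; ring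
    _ ≤ I₁ * (Ib + Id) / V ^ 2 :=
        ENNReal.div_le_div_right (mul_le_mul_right h1 I₁) _
    _ = I₁ * Ib / V ^ 2 + I₁ * Id / V ^ 2 := by rw [mul_add, ENNReal.add_div]
    _ ≤ biM f₁ (fun y => b y * f₂ y) x + Mc2 b f₁ f₂ x := by
        refine add_le_add ?_ ?_
        · refine le_trans (le_of_eq ?_) (term_le_biM f₁ (fun y => b y * f₂ y) x c hr hx)
          show _ = (∫⁻ y in Cube c r, ENNReal.ofReal |f₁ y|) / V *
            ((∫⁻ y in Cube c r, ENNReal.ofReal |b y * f₂ y|) / V)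
          rw [Ib_eq, div_sq hV0 hVt]
        · refine le_trans ?_ (term_le_Mc2 b f₁ f₂ x c hr hx)
          exact ENNReal.div_le_div_right (fub2 b f₁ f₂ x c r) _

lemma key4 (hb : AEMeasurable b volume) (f₁ f₂ : Rn n → ℝ) (x : Rn n) :
    biM f₁ (fun y => b y * f₂ y) x ≤
      ENNReal.ofReal |b x| * biM f₁ f₂ x + Mc2 b f₁ f₂ x := by
  rw [show biM f₁ (fun y => b y * f₂ y) x =
      ⨆ (c : Rn n) (r : ℝ) (_ : 0 < r) (_ : x ∈ Cube c r),
        cubeAvgE (fun y => ENNReal.ofReal |f₁ y|) c r *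
          cubeAvgE (fun y => ENNReal.ofReal |b y * f₂ y|) c r from rfl]
  refine iSup_le fun c => iSup_le fun r => iSup_le fun hr => iSup_le fun hx => ?_
  have hV0 := cube_vol_ne_zero c hr
  have hVt := cube_vol_ne_top c r
  set V := volume (Cube c r)
  set I₁ := ∫⁻ y in Cube c r, ENNReal.ofReal |f₁ y| with hI₁
  set I₂ := ∫⁻ y in Cube c r, ENNReal.ofReal |f₂ y| with hI₂
  set Ib := ∫⁻ y in Cube c r, ENNReal.ofReal |b y| * ENNReal.ofReal |f₂ y| with hIb
  set Id := ∫⁻ y in Cube c r, ENNReal.ofReal |b x - b y| * ENNReal.ofReal |f₂ y| with hId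
  have h1 : Ib ≤ ENNReal.ofReal |b x| * I₂ + Id :=
    my_L2 _ ENNReal.ofReal_ne_top _ _ _
      (((measurable_abs.comp_aemeasurable hb).ennreal_ofReal).restrict)
      (fun y => ENNReal.ofReal_ne_top)
      (fun y => by
        have := abs_ofReal_le (b y) (b x)
        rwa [show |b y - b x| = |b x - b y| from abs_sub_comm _ _] at this)
  calc cubeAvgE (fun y => ENNReal.ofReal |f₁ y|) c r *
        cubeAvgE (fun y => ENNReal.ofReal |b y * f₂ y|) c r
      = I₁ * Ib / V ^ 2 := by
        show I₁ / V * ((∫⁻ y in Cube c r, ENNReal.ofReal |b y * f₂ y|) / V) = _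
        rw [Ib_eq, div_sq hV0 hVt]
    _ ≤ I₁ * (ENNReal.ofReal |b x| * I₂ + Id) / V ^ 2 :=
        ENNReal.div_le_div_right (mul_le_mul_right h1 I₁) _
    _ = ENNReal.ofReal |b x| * (I₁ * I₂ / V ^ 2) + I₁ * Id / V ^ 2 := by
        simp only [div_eq_mul_inv]; ring
    _ ≤ ENNReal.ofReal |b x| * biM f₁ f₂ x + Mc2 b f₁ f₂ x := by
        refine add_le_add (mul_le_mul_right ?_ _) ?_
        · refine le_trans (le_of_eq ?_) (term_le_biM f₁ f₂ x c hr hx)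
          rw [← div_sq hV0 hVt]
          rfl
        · refine le_trans ?_ (term_le_Mc2 b f₁ f₂ x c hr hx)
          exact ENNReal.div_le_div_right (fub2 b f₁ f₂ x c r) _

end keys


section final
open MeasureTheory

lemma slot_bound (A B M : ℝ≥0∞) (bx : ℝ)
    (h1 : ENNReal.ofReal |bx| * A ≤ B + M) (h2 : B ≤ ENNReal.ofReal |bx| * A + M) :
    ENNReal.ofReal |bx * A.toReal - B.toReal| ≤
      M + 2 * (ENNReal.ofReal (max (-bx) 0) * A) := by
  have hmax : |bx| - 2 * max (-bx) 0 = bx := by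
    rcases le_total 0 bx with h | h
    · rw [abs_of_nonneg h, max_eq_right (neg_nonpos.2 h)]; ring
    · rw [abs_of_nonpos h, max_eq_left (neg_nonneg.2 h)]; ring
  have hX : ENNReal.ofReal |(|bx|) * A.toReal - B.toReal| ≤ M := by
    rcases eq_or_ne M ∞ with hM | hM
    · simp [hM]
    rcases eq_or_ne A ∞ with hA | hA
    · rcases eq_or_ne B ∞ with hB | hB
      · simp [hA, hB]
      · have hcE : ENNReal.ofReal |bx| = 0 := by
          by_contra hne
          have htop : ENNReal.ofReal |bx| * A = ∞ := by rw [hA, ENNReal.mul_top hne]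
          rw [htop] at h1
          exact (ENNReal.add_ne_top.mpr ⟨hB, hM⟩) (top_le_iff.mp h1)
        have hB' : B ≤ M := by rwa [hcE, zero_mul, zero_add] at h2
        have : |(|bx|) * A.toReal - B.toReal| = B.toReal := by
          rw [hA]; simp [ENNReal.toReal_nonneg, abs_of_nonpos]
        rw [this, ← ENNReal.ofReal_toReal hM]
        exact ENNReal.ofReal_le_ofReal (ENNReal.toReal_mono hM hB')
    · have hB : B ≠ ∞ := by
        intro hB
        rw [hB] at h2
        exact (ENNReal.add_ne_top.mpr
          ⟨ENNReal.mul_ne_top ENNReal.ofReal_ne_top hA, hM⟩) (top_le_iff.mp h2)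
      have hca : (ENNReal.ofReal |bx| * A).toReal = |bx| * A.toReal := by
        rw [ENNReal.toReal_mul, ENNReal.toReal_ofReal (abs_nonneg _)]
      have e1 : |bx| * A.toReal ≤ B.toReal + M.toReal := by
        have := ENNReal.toReal_mono (ENNReal.add_ne_top.mpr ⟨hB, hM⟩) h1
        rwa [hca, ENNReal.toReal_add hB hM] at this
      have e2 : B.toReal ≤ |bx| * A.toReal + M.toReal := by
        have := ENNReal.toReal_mono (ENNReal.add_ne_top.mpr
          ⟨ENNReal.mul_ne_top ENNReal.ofReal_ne_top hA, hM⟩) h2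
        rwa [ENNReal.toReal_add (ENNReal.mul_ne_top ENNReal.ofReal_ne_top hA) hM, hca] at this
      have habs : |(|bx|) * A.toReal - B.toReal| ≤ M.toReal :=
        abs_sub_le_iff.2 ⟨by linarith, by linarith⟩
      exact (ENNReal.ofReal_le_ofReal habs).trans (le_of_eq (ENNReal.ofReal_toReal hM))
  have hid : bx * A.toReal - B.toReal =
      (|bx| * A.toReal - B.toReal) + (-(2 * max (-bx) 0 * A.toReal)) := by
    linear_combination (-A.toReal) * hmax
  calc ENNReal.ofReal |bx * A.toReal - B.toReal|
      ≤ ENNReal.ofReal (|(|bx|) * A.toReal - B.toReal| + 2 * max (-bx) 0 * A.toReal) := by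
        refine ENNReal.ofReal_le_ofReal ?_
        rw [hid]
        refine (abs_add_le _ _).trans ?_
        rw [abs_neg, abs_of_nonneg (mul_nonneg (mul_nonneg (by norm_num) (le_max_right _ _))
          ENNReal.toReal_nonneg)]
    _ = ENNReal.ofReal |(|bx|) * A.toReal - B.toReal| +
        ENNReal.ofReal (2 * max (-bx) 0 * A.toReal) := by
        rw [ENNReal.ofReal_add (abs_nonneg _) (mul_nonneg (mul_nonneg (by norm_num)
          (le_max_right _ _)) ENNReal.toReal_nonneg)]
    _ ≤ M + 2 * (ENNReal.ofReal (max (-bx) 0) * A) := by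
        refine add_le_add hX ?_
        rw [mul_assoc, ENNReal.ofReal_mul (by norm_num), ENNReal.ofReal_mul (le_max_right _ _)]
        calc ENNReal.ofReal 2 * (ENNReal.ofReal (max (-bx) 0) * ENNReal.ofReal A.toReal)
            ≤ 2 * (ENNReal.ofReal (max (-bx) 0) * A) := by
              rw [ENNReal.ofReal_ofNat]
              exact mul_le_mul_right (mul_le_mul_right ENNReal.ofReal_toReal_le _) _

end final


/-- pointwise |[Σb⃗,𝓜](f₁,f₂)| ≤ C(𝓜_{Σb⃗}(f₁,f₂) + b⁻·𝓜(f₁,f₂)). -/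
theorem stmt8 {n : ℕ} (b : Rn n → ℝ) (hb : LocallyIntegrable b) :
    ∃ C : ℝ≥0, ∀ (f₁ f₂ : Rn n → ℝ) (x : Rn n),
      ENNReal.ofReal |commSigma b f₁ f₂ x| ≤
        (C : ℝ≥0∞) * (MSigma b f₁ f₂ x + ENNReal.ofReal (bminus b x) * biM f₁ f₂ x) := by
  refine ⟨4, fun f₁ f₂ x => ?_⟩
  have hbm : AEMeasurable b volume := hb.aestronglyMeasurable.aemeasurable
  have s1 := slot_bound (biM f₁ f₂ x) (biM (fun y => b y * f₁ y) f₂ x) (Mc1 b f₁ f₂ x) (b x)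
    (key1 hbm f₁ f₂ x) (key2 hbm f₁ f₂ x)
  have s2 := slot_bound (biM f₁ f₂ x) (biM f₁ (fun y => b y * f₂ y) x) (Mc2 b f₁ f₂ x) (b x)
    (key3 hbm f₁ f₂ x) (key4 hbm f₁ f₂ x)
  calc ENNReal.ofReal |commSigma b f₁ f₂ x|
      ≤ ENNReal.ofReal |b x * (biM f₁ f₂ x).toReal - (biM (fun y => b y * f₁ y) f₂ x).toReal| +
        ENNReal.ofReal |b x * (biM f₁ f₂ x).toReal - (biM f₁ (fun y => b y * f₂ y) x).toReal| := by
        rw [← ENNReal.ofReal_add (abs_nonneg _) (abs_nonneg _)]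
        exact ENNReal.ofReal_le_ofReal (abs_add_le _ _)
    _ ≤ (Mc1 b f₁ f₂ x + 2 * (ENNReal.ofReal (max (-b x) 0) * biM f₁ f₂ x)) +
        (Mc2 b f₁ f₂ x + 2 * (ENNReal.ofReal (max (-b x) 0) * biM f₁ f₂ x)) := add_le_add s1 s2
    _ = (Mc1 b f₁ f₂ x + Mc2 b f₁ f₂ x) +
        4 * (ENNReal.ofReal (max (-b x) 0) * biM f₁ f₂ x) := by ring
    _ ≤ 4 * (Mc1 b f₁ f₂ x + Mc2 b f₁ f₂ x) +
        4 * (ENNReal.ofReal (max (-b x) 0) * biM f₁ f₂ x) :=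
        add_le_add_left (le_mul_of_one_le_left' (by norm_num : (1 : ℝ≥0∞) ≤ 4)) _
    _ = 4 * ((Mc1 b f₁ f₂ x + Mc2 b f₁ f₂ x) +
        ENNReal.ofReal (max (-b x) 0) * biM f₁ f₂ x) := by ring
    _ = ((4 : ℝ≥0) : ℝ≥0∞) * (MSigma b f₁ f₂ x + ENNReal.ofReal (bminus b x) * biM f₁ f₂ x) := by
        simp only [MSigma, bminus]
        norm_num
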